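/- Let P be a path of maximum length in a graph G starting at a vertex p_0, let X be a connected set of ending vertices for P, and let S be the set of all ending vertices for P. Then |N_G(X)| ≤ 2|S|. -/

import Mathlib

open SimpleGraph

/-- `Q` is a rotation of `P`: if `P = p₀ … x … p_t` (with endpoint `b = p_t`) and `x b` is an
edge, the rotation is `p₀ … x b p_{t-1} … `, obtained by reversing the segment after `x` and
appending it after the new edge `x b`.  This is captured by the relation between the vertex
sequences (supports) of the two walks. -/
def IsRotation {V : Type*} {G : SimpleGraph V} {a b c : V}
    (P : G.Walk a b) (Q : G.Walk a c) : Prop :=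
  ∃ (l1 l2 : List V) (x : V),
    P.support = l1 ++ x :: (l2 ++ [b]) ∧ Q.support = l1 ++ x :: b :: l2.reverse

/-- `Q` is derived from `P`: obtained from `P` by a finite sequence of rotations. -/
def IsDerived {V : Type*} {G : SimpleGraph V} {a b c : V}
    (P : G.Walk a b) (Q : G.Walk a c) : Prop :=
  Relation.ReflTransGen (fun R S : (Σ v : V, G.Walk a v) => IsRotation R.2 S.2) ⟨b, P⟩ ⟨c, Q⟩

/-- `x` is an ending vertex for `P`: some path derived from `P` ends at `x`. -/
def IsEndingVertex {V : Type*} {G : SimpleGraph V} {a b : V}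
    (P : G.Walk a b) (x : V) : Prop :=
  ∃ Q : G.Walk a x, IsDerived P Q

/-- `X` is a connected set of ending vertices for `P`: for every `x ∈ X` there is a walk
ending at `x` derived from `P` by a sequence of rotations all of whose intermediate
walks end at vertices of `X`. -/
def IsConnectedEndingSet {V : Type*} {G : SimpleGraph V} {a b : V}
    (P : G.Walk a b) (X : Set V) : Prop :=
  ∀ x ∈ X, ∃ Q : G.Walk a x,
    Relation.ReflTransGen
      (fun R S : (Σ v : V, G.Walk a v) => IsRotation R.2 S.2 ∧ S.1 ∈ X) ⟨b, P⟩ ⟨x, Q⟩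

/-- `N_G(S)`: the set of vertices outside `S` having a neighbour in `S`. -/
def setNbhd {V : Type*} (G : SimpleGraph V) (S : Set V) : Set V :=
  {v | v ∉ S ∧ ∃ s ∈ S, G.Adj v s}

section Posa

variable {V : Type*} {G : SimpleGraph V}

/-- consecutive pairs of a list -/
private def pairsL : List V → List (V × V)
  | a :: b :: t => (a, b) :: pairsL (b :: t)
  | _ => []

@[simp] private lemma pairsL_nil : pairsL ([] : List V) = [] := rfl
@[simp] private lemma pairsL_single (a : V) : pairsL [a] = [] := rfl
@[simp] private lemma pairsL_cons_cons (a b : V) (t : List V) :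
    pairsL (a :: b :: t) = (a, b) :: pairsL (b :: t) := rfl

private lemma pairsL_append_cons (A : List V) (w : V) (B : List V) :
    pairsL (A ++ w :: B) = pairsL (A ++ [w]) ++ pairsL (w :: B) := by
  induction A with
  | nil => simp
  | cons a A ih =>
    cases A with
    | nil => cases B <;> simp
    | cons a' A' => simpa using ih

private lemma pairsL_snoc (l : List V) (hl : l ≠ []) (v : V) :
    pairsL (l ++ [v]) = pairsL l ++ [(l.getLast hl, v)] := by
  induction l with
  | nil => simp at hl
  | cons a l ih =>
    cases l with
    | nil => simp
    | cons a' l' => simpa using ih (by simp)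

private lemma pairsL_reverse (l : List V) :
    pairsL l.reverse = (pairsL l).reverse.map Prod.swap := by
  induction l with
  | nil => simp
  | cons a l ih =>
    cases l with
    | nil => simp
    | cons a' l' =>
      have h : (a' :: l').reverse ≠ [] := by simp
      rw [List.reverse_cons, pairsL_snoc _ h a, ih]
      simp [List.getLast_reverse]

private lemma mem_pairs_reverse {l : List V} {z : Sym2 V} :
    z ∈ (pairsL l.reverse).map (fun p => s(p.1, p.2)) ↔
      z ∈ (pairsL l).map (fun p => s(p.1, p.2)) := by
  rw [pairsL_reverse, List.map_map]
  constructor <;> intro h <;> simp only [List.mem_map] at h ⊢ <;>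
    obtain ⟨p, hp, rfl⟩ := h
  · refine ⟨p, by simpa using hp, ?_⟩
    simp [Sym2.eq_swap]
  · refine ⟨p, by simpa using hp, ?_⟩
    simp [Sym2.eq_swap]

private lemma edges_eq_pairs {a c : V} (W : G.Walk a c) :
    W.edges = (pairsL W.support).map (fun p => s(p.1, p.2)) := by
  induction W with
  | nil => rfl
  | cons h q ih =>
    rw [Walk.edges_cons, Walk.support_cons, q.support_eq_cons, pairsL_cons_cons,
      List.map_cons, ← q.support_eq_cons, ih]

private lemma mem_map_pairsL_cons {L : List V} {x : V} {f : V × V → Sym2 V} {z : Sym2 V}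
    (h : z ∈ (pairsL L).map f) : z ∈ (pairsL (x :: L)).map f := by
  cases L with
  | nil => simp at h
  | cons a t => rw [pairsL_cons_cons, List.map_cons]; exact List.mem_cons_of_mem _ h

private lemma rotation_mem_edges {a c c' : V} {R : G.Walk a c} {Q : G.Walk a c'}
    (hrot : IsRotation R Q) : ∀ z ∈ R.edges, z ∈ Q.edges ∨ c' ∈ z := by
  obtain ⟨l1, l2, x, hR, hQ⟩ := hrot
  intro z hz
  rw [edges_eq_pairs, hR] at hz
  cases l2 with
  | nil =>
    left
    rw [edges_eq_pairs, hQ]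
    simpa using hz
  | cons h2 t2 =>
    have hc' : c' = h2 := by
      have h1 : Q.support.getLast? = some c' := by
        rw [List.getLast?_eq_getLast (by simp : Q.support ≠ []), Q.getLast_support]
      rw [hQ, show l1 ++ x :: c :: (h2 :: t2).reverse
            = (l1 ++ x :: c :: t2.reverse) ++ [h2] by simp,
        List.getLast?_concat] at h1
      exact (Option.some_injective _ h1).symm
    rw [pairsL_append_cons l1 x ((h2 :: t2) ++ [c]), List.map_append, List.mem_append] at hz
    rcases hz with hz | hz
    · left
      rw [edges_eq_pairs, hQ, pairsL_append_cons l1 x (c :: (h2 :: t2).reverse),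
        List.map_append, List.mem_append]
      exact Or.inl hz
    · rw [show (x :: ((h2 :: t2) ++ [c])) = x :: h2 :: (t2 ++ [c]) by simp,
        pairsL_cons_cons, List.map_cons, List.mem_cons] at hz
      rcases hz with hz | hz
      · right
        rw [hz, hc']
        simp
      · left
        rw [edges_eq_pairs, hQ, pairsL_append_cons l1 x (c :: (h2 :: t2).reverse),
          List.map_append, List.mem_append]
        right
        apply mem_map_pairsL_cons
        have hmem : z ∈ (pairsL ((h2 :: t2 ++ [c]).reverse)).map (fun p => s(p.1, p.2)) := by
          rw [mem_pairs_reverse]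
          simpa using hz
        rw [show ((h2 :: t2 ++ [c]).reverse) = c :: (h2 :: t2).reverse by simp] at hmem
        exact hmem

private lemma rotation_support_perm {a c c' : V} {R : G.Walk a c} {Q : G.Walk a c'}
    (hrot : IsRotation R Q) : Q.support.Perm R.support := by
  obtain ⟨l1, l2, x, hR, hQ⟩ := hrot
  rw [hR, hQ]
  refine List.Perm.append_left _ (List.Perm.cons _ ?_)
  exact ((List.reverse_perm l2).cons c).trans (List.perm_append_singleton c l2).symm

private lemma derived_support_perm {a b c : V} {P : G.Walk a b} {Q : G.Walk a c}
    (h : IsDerived P Q) : Q.support.Perm P.support := by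
  have key : ∀ (s : Σ v : V, G.Walk a v),
      Relation.ReflTransGen (fun R S : (Σ v : V, G.Walk a v) => IsRotation R.2 S.2)
        ⟨b, P⟩ s → s.2.support.Perm P.support := by
    intro s hs
    induction hs with
    | refl => exact List.Perm.refl _
    | tail _ hstep ih => exact (rotation_support_perm hstep).trans ih
  exact key ⟨c, Q⟩ h

private lemma derived_isPath {a b c : V} {P : G.Walk a b} {Q : G.Walk a c}
    (h : IsDerived P Q) (hP : P.IsPath) : Q.IsPath := by
  rw [Walk.isPath_def] at hP ⊢
  exact (derived_support_perm h).nodup_iff.mpr hP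

private lemma derived_length {a b c : V} {P : G.Walk a b} {Q : G.Walk a c}
    (h : IsDerived P Q) : Q.length = P.length := by
  have := (derived_support_perm h).length_eq
  rw [Walk.length_support, Walk.length_support] at this
  omega

private lemma chain_to_derived {a b c : V} {P : G.Walk a b} {Q : G.Walk a c} {X : Set V}
    (h : Relation.ReflTransGen
      (fun R S : (Σ v : V, G.Walk a v) => IsRotation R.2 S.2 ∧ S.1 ∈ X) ⟨b, P⟩ ⟨c, Q⟩) :
    IsDerived P Q :=
  by
  have key : ∀ s, Relation.ReflTransGen
      (fun R S : (Σ v : V, G.Walk a v) => IsRotation R.2 S.2 ∧ S.1 ∈ X) ⟨b, P⟩ s →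
      Relation.ReflTransGen (fun R S : (Σ v : V, G.Walk a v) => IsRotation R.2 S.2) ⟨b, P⟩ s := by
    intro s hs
    induction hs with
    | refl => exact Relation.ReflTransGen.refl
    | tail _ hstep ih => exact Relation.ReflTransGen.tail ih hstep.1
  exact key ⟨c, Q⟩ h

private lemma chain_persist {a b c : V} {P : G.Walk a b} {Q : G.Walk a c} {X : Set V}
    (h : Relation.ReflTransGen
      (fun R S : (Σ v : V, G.Walk a v) => IsRotation R.2 S.2 ∧ S.1 ∈ X) ⟨b, P⟩ ⟨c, Q⟩)
    (z : Sym2 V) (hz : z ∈ P.edges) (hnX : ∀ w ∈ z, w ∉ X) : z ∈ Q.edges := by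
  have key : ∀ (s : Σ v : V, G.Walk a v),
      Relation.ReflTransGen (fun R S : (Σ v : V, G.Walk a v) => IsRotation R.2 S.2 ∧ S.1 ∈ X)
        ⟨b, P⟩ s → z ∈ s.2.edges := by
    intro s hs
    induction hs with
    | refl => exact hz
    | tail _ hstep ih =>
      rcases rotation_mem_edges hstep.1 z ih with h' | h'
      · exact h'
      · exact absurd hstep.2 (hnX _ h')
  exact key ⟨c, Q⟩ h

private lemma path_start_unique {u y v1 v2 : V} {Q : G.Walk u y} (h : Q.IsPath)
    (h1 : s(u, v1) ∈ Q.edges) (h2 : s(u, v2) ∈ Q.edges) : v1 = v2 := by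
  cases Q with
  | nil => simp at h1
  | @cons _ w _ hadj q =>
    rw [Walk.cons_isPath_iff] at h
    rw [Walk.edges_cons, List.mem_cons] at h1 h2
    have key : ∀ v : V, s(u, v) = s(u, w) ∨ s(u, v) ∈ q.edges → v = w := by
      intro v hv
      rcases hv with hv | hv
      · rw [Sym2.eq_iff] at hv
        rcases hv with ⟨-, rfl⟩ | ⟨rfl, rfl⟩ <;> rfl
      · exact absurd (q.fst_mem_support_of_mem_edges hv) h.2
    rw [key v1 h1, key v2 h2]

private lemma path_end_unique {u y v1 v2 : V} {Q : G.Walk y u} (h : Q.IsPath)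
    (h1 : s(u, v1) ∈ Q.edges) (h2 : s(u, v2) ∈ Q.edges) : v1 = v2 := by
  refine path_start_unique (Q := Q.reverse) h.reverse ?_ ?_ <;>
    rw [Walk.edges_reverse, List.mem_reverse] <;> assumption

private lemma path_triple {a y u v1 v2 v3 : V} {Q : G.Walk a y} (h : Q.IsPath)
    (h1 : s(u, v1) ∈ Q.edges) (h2 : s(u, v2) ∈ Q.edges) (h3 : s(u, v3) ∈ Q.edges) :
    v1 = v2 ∨ v1 = v3 ∨ v2 = v3 := by
  induction Q with
  | nil => simp at h1
  | @cons a w _ hadj q ih =>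
    rw [Walk.cons_isPath_iff] at h
    rw [Walk.edges_cons, List.mem_cons] at h1 h2 h3
    by_cases hu : u = a
    · subst hu
      have key : ∀ v : V, s(u, v) = s(u, w) ∨ s(u, v) ∈ q.edges → v = w := by
        intro v hv
        rcases hv with hv | hv
        · rw [Sym2.eq_iff] at hv
          rcases hv with ⟨-, rfl⟩ | ⟨rfl, rfl⟩ <;> rfl
        · exact absurd (q.fst_mem_support_of_mem_edges hv) h.2
      rw [key v1 h1, key v2 h2]
      left; rfl
    · have key : ∀ v : V, s(u, v) = s(a, w) → u = w ∧ v = a := by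
        intro v hv
        rw [Sym2.eq_iff] at hv
        rcases hv with ⟨rfl, rfl⟩ | ⟨rfl, rfl⟩
        · exact absurd rfl hu
        · exact ⟨rfl, rfl⟩
      rcases h1 with h1 | h1
      · obtain ⟨rfl, rfl⟩ := key _ h1
        rcases h2 with h2 | h2
        · left; exact ((key _ h2).2).symm
        · rcases h3 with h3 | h3
          · right; left; exact ((key _ h3).2).symm
          · right; right; exact path_start_unique h.1 h2 h3
      · rcases h2 with h2 | h2
        · obtain ⟨rfl, rfl⟩ := key _ h2
          rcases h3 with h3 | h3
          · right; right; exact ((key _ h3).2).symm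
          · right; left; exact path_start_unique h.1 h1 h3
        · rcases h3 with h3 | h3
          · obtain ⟨rfl, rfl⟩ := key _ h3
            left; exact path_start_unique h.1 h1 h2
          · exact ih h.1 h1 h2 h3

private lemma support_eq_dropLast {a c : V} (W : G.Walk a c) :
    W.support = W.support.dropLast ++ [c] := by
  conv_lhs => rw [← List.dropLast_append_getLast (l := W.support) (by simp)]
  rw [W.getLast_support]

private lemma internal_two {a y u : V} {Q : G.Walk a y} (h : Q.IsPath)
    (hu : u ∈ Q.support) (ha : u ≠ a) (hy : u ≠ y) :
    ∃ v1 v2, v1 ≠ v2 ∧ s(u, v1) ∈ Q.edges ∧ s(u, v2) ∈ Q.edges := by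
  haveI := Classical.decEq V
  have hspec := Q.take_spec hu
  set Q1 := Q.takeUntil u hu with hQ1
  set Q2 := Q.dropUntil u hu with hQ2
  obtain ⟨v1, h1, R1, hR1⟩ := Walk.exists_eq_cons_of_ne ha Q1.reverse
  obtain ⟨v2, h2, R2, hR2⟩ := Walk.exists_eq_cons_of_ne hy Q2
  refine ⟨v1, v2, ?_, ?_, ?_⟩
  · have hv1 : v1 ∈ Q1.support := by
      have : v1 ∈ Q1.reverse.support := by rw [hR1]; simp [Walk.start_mem_support]
      rwa [Walk.support_reverse, List.mem_reverse] at this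
    have hv2 : v2 ∈ Q2.support.tail := by
      rw [hR2]; simp [Walk.start_mem_support]
    have hnodup : (Q1.support ++ Q2.support.tail).Nodup := by
      rw [← Walk.support_append, hspec]
      exact h.support_nodup
    have hdisj := List.disjoint_of_nodup_append hnodup
    intro hcon
    exact hdisj hv1 (hcon ▸ hv2)
  · have : s(u, v1) ∈ Q1.reverse.edges := by rw [hR1]; simp
    rw [Walk.edges_reverse, List.mem_reverse] at this
    rw [← hspec, Walk.edges_append, List.mem_append]
    exact Or.inl this
  · rw [← hspec, Walk.edges_append, List.mem_append]
    right
    rw [hR2]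
    simp

private lemma rotate_exists {p₀ x u : V} (Q : G.Walk p₀ x)
    (hu : u ∈ Q.support) (hne : u ≠ x) (hadj : G.Adj u x) :
    ∃ (w : V) (Q' : G.Walk p₀ w), IsRotation Q Q' ∧ s(u, w) ∈ Q.edges := by
  haveI := Classical.decEq V
  have hspec := Q.take_spec hu
  set Q1 := Q.takeUntil u hu with hQ1
  set Q2 := Q.dropUntil u hu with hQ2
  obtain ⟨w, h2, Q3, hQ23⟩ := Walk.exists_eq_cons_of_ne hne Q2
  refine ⟨w, Q1.append (Walk.cons hadj Q3.reverse), ?_, ?_⟩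
  · refine ⟨Q1.support.dropLast, Q3.support.dropLast, u, ?_, ?_⟩
    · rw [← hspec, Walk.support_append, hQ23]
      rw [show (Walk.cons h2 Q3).support.tail = Q3.support from rfl]
      conv_lhs => rw [support_eq_dropLast Q1, support_eq_dropLast Q3]
      simp
      conv_lhs => rw [support_eq_dropLast Q1]
      simp only [List.append_assoc, List.singleton_append]
    · rw [Walk.support_append, Walk.support_cons, Walk.support_reverse]
      conv_lhs => rw [support_eq_dropLast Q1]
      conv_lhs => rw [support_eq_dropLast Q3]
      simp
      conv_lhs => rw [support_eq_dropLast Q1, support_eq_dropLast Q3]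
      simp only [List.reverse_append, List.reverse_singleton, List.append_assoc,
        List.singleton_append]
  · rw [← hspec, Walk.edges_append, List.mem_append, hQ23]
    right
    simp

private lemma isPath_concat {a c u : V} {Q : G.Walk a c} (h : Q.IsPath)
    (hadj : G.Adj c u) (hu : u ∉ Q.support) : (Q.concat hadj).IsPath := by
  have h1 : ((Q.concat hadj).reverse).IsPath := by
    rw [Walk.reverse_concat]
    exact (Walk.cons_isPath_iff _ _).mpr ⟨h.reverse, by
      rw [Walk.support_reverse, List.mem_reverse]; exact hu⟩
  have := h1.reverse
  rwa [Walk.reverse_reverse] at this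

end Posa

/-- Pósa's lemma, part (i): if `P` is a path of maximum length in `G` starting at `p₀`,
`X` is a connected set of ending vertices for `P`, and `S` is the set of all ending
vertices for `P`, then `|N_G(X)| ≤ 2|S|`. -/
theorem stmt8 {V : Type*} [Fintype V] {G : SimpleGraph V} {p₀ b : V}
    (P : G.Walk p₀ b) (hP : P.IsPath)
    (hmax : ∀ (u v : V) (Q : G.Walk u v), Q.IsPath → Q.length ≤ P.length)
    (X : Set V) (hX : IsConnectedEndingSet P X) :
    (setNbhd G X).ncard ≤ 2 * {x : V | IsEndingVertex P x}.ncard := by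
  classical
  set S : Set V := {x : V | IsEndingVertex P x} with hSdef
  have hbS : b ∈ S := ⟨P, Relation.ReflTransGen.refl⟩
  by_cases hlen : P.length = 0
  · have hempty : setNbhd G X = ∅ := by
      ext u
      simp only [setNbhd, Set.mem_setOf_eq, Set.mem_empty_iff_false, iff_false, not_and]
      rintro - ⟨s', -, hadj⟩
      have hpath : (Walk.cons hadj Walk.nil : G.Walk u s').IsPath := by
        simp [Walk.isPath_def, hadj.ne]
      have := hmax u s' _ hpath
      simp [hlen] at this
    rw [hempty]
    simp
  · have hpb : p₀ ≠ b := by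
      intro hcon
      subst hcon
      have : P = Walk.nil := Walk.isPath_iff_eq_nil.mp hP
      rw [this] at hlen
      simp at hlen
    have hXS : ∀ y ∈ X, y ∈ S := by
      intro y hy
      obtain ⟨Q, hQ⟩ := hX y hy
      exact ⟨Q, chain_to_derived hQ⟩
    -- main claim
    have hmain : ∀ u ∈ setNbhd G X, u ≠ b → ∃ w, w ∈ S ∧ s(u, w) ∈ P.edges := by
      intro u hu hub
      obtain ⟨huX, x, hxX, hadj⟩ := hu
      by_cases hPnbr : ∃ w, s(u, w) ∈ P.edges ∧ w ∈ X
      · obtain ⟨w, hw1, hw2⟩ := hPnbr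
        exact ⟨w, hXS w hw2, hw1⟩
      push_neg at hPnbr
      obtain ⟨Q, hchain⟩ := hX x hxX
      have hder := chain_to_derived hchain
      have hQpath := derived_isPath hder hP
      have hQlen := derived_length hder
      have hperm := derived_support_perm hder
      have huQ : u ∈ Q.support := by
        by_contra hcon
        have hpath := isPath_concat hQpath hadj.symm hcon
        have := hmax _ _ _ hpath
        rw [Walk.length_concat, hQlen] at this
        omega
      have hux : u ≠ x := fun h => huX (h ▸ hxX)
      obtain ⟨w, Q', hrot, hedge⟩ := rotate_exists Q huQ hux hadj
      have hwS : w ∈ S := ⟨Q', Relation.ReflTransGen.tail hder hrot⟩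
      refine ⟨w, hwS, ?_⟩
      by_cases hup : u = p₀
      · subst hup
        obtain ⟨p₁, hadj1, P', hPeq⟩ := Walk.exists_eq_cons_of_ne hpb P
        have he1 : s(u, p₁) ∈ P.edges := by rw [hPeq]; simp
        have he1Q : s(u, p₁) ∈ Q.edges := by
          refine chain_persist hchain _ he1 ?_
          intro t ht
          rw [Sym2.mem_iff] at ht
          rcases ht with rfl | rfl
          · exact huX
          · exact hPnbr _ he1
        have : p₁ = w := path_start_unique hQpath he1Q hedge
        rwa [← this]
      · have huP : u ∈ P.support := hperm.mem_iff.mp huQ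
        obtain ⟨v1, v2, hv12, he1, he2⟩ := internal_two hP huP hup hub
        have hnx : ∀ (v : V), s(u, v) ∈ P.edges → ∀ t ∈ s(u, v), t ∉ X := by
          intro v hv t ht
          rw [Sym2.mem_iff] at ht
          rcases ht with rfl | rfl
          · exact huX
          · exact hPnbr _ hv
        have h1Q := chain_persist hchain _ he1 (hnx v1 he1)
        have h2Q := chain_persist hchain _ he2 (hnx v2 he2)
        rcases path_triple hQpath h1Q h2Q hedge with h' | h' | h'
        · exact absurd h' hv12
        · rwa [← h']
        · rwa [← h']
    -- counting
    set A : Set V := setNbhd G X with hAdef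
    have hfex : ∀ u : V, ∃ w, w ∈ S ∧ (u ∈ A → u ≠ b → s(u, w) ∈ P.edges) ∧ (u = b → w = u) := by
      intro u
      by_cases h : u ∈ A ∧ u ≠ b
      · obtain ⟨w, h1, h2⟩ := hmain u h.1 h.2
        exact ⟨w, h1, fun _ _ => h2, fun hb => absurd hb h.2⟩
      · exact ⟨b, hbS, fun h1 h2 => absurd ⟨h1, h2⟩ h, fun hb => hb.symm⟩
    choose f hfS hfe hfb' using hfex
    set FA := (Set.toFinite A).toFinset with hFA
    set FS := (Set.toFinite S).toFinset with hFS
    have hcard : FA.card ≤ 2 * (FA.image f).card := by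
      refine Finset.card_le_mul_card_image FA 2 ?_
      intro s hs
      by_contra hcon
      push_neg at hcon
      obtain ⟨u1, u2, u3, hm1, hm2, hm3, h12, h13, h23⟩ :=
        Finset.two_lt_card_iff.mp hcon
      have hprop : ∀ u, u ∈ FA.filter (fun x => f x = s) → u ∈ A ∧ f u = s := by
        intro u hu
        rw [Finset.mem_filter, Set.Finite.mem_toFinset] at hu
        exact hu
      obtain ⟨hA1, hf1⟩ := hprop _ hm1
      obtain ⟨hA2, hf2⟩ := hprop _ hm2
      obtain ⟨hA3, hf3⟩ := hprop _ hm3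
      have hedge : ∀ u, u ∈ A → f u = s → u ≠ b → s(s, u) ∈ P.edges := by
        intro u hu hfu hub
        have := hfe u hu hub
        rw [hfu] at this
        rwa [Sym2.eq_swap] at this
      have hfb : f b = b := hfb' b rfl
      by_cases hsb : s = b
      · have hend : ∀ v1 v2 : V, v1 ≠ v2 → v1 ≠ b → v2 ≠ b → v1 ∈ A → v2 ∈ A →
            f v1 = s → f v2 = s → False := by
          intro v1 v2 hne h1b h2b hA1' hA2' hfv1 hfv2
          have e1 := hedge v1 hA1' hfv1 h1b
          have e2 := hedge v2 hA2' hfv2 h2b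
          rw [hsb] at e1 e2
          exact hne (path_end_unique hP e1 e2)
        by_cases hb1 : u1 = b
        · refine hend u2 u3 h23 (fun h => h12 (hb1 ▸ h).symm) (fun h => h13 (hb1 ▸ h).symm) hA2 hA3 hf2 hf3
        · by_cases hb2 : u2 = b
          · exact hend u1 u3 h13 hb1 (fun h => h23 (hb2 ▸ h).symm) hA1 hA3 hf1 hf3
          · exact hend u1 u2 h12 hb1 hb2 hA1 hA2 hf1 hf2
      · have hub : ∀ u, u ∈ A → f u = s → u ≠ b := by
          intro u hu hfu hcon'
          subst hcon'
          rw [hfb] at hfu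
          exact hsb hfu.symm
        have e1 := hedge u1 hA1 hf1 (hub u1 hA1 hf1)
        have e2 := hedge u2 hA2 hf2 (hub u2 hA2 hf2)
        have e3 := hedge u3 hA3 hf3 (hub u3 hA3 hf3)
        rcases path_triple hP e1 e2 e3 with h' | h' | h'
        · exact h12 h'
        · exact h13 h'
        · exact h23 h'
    have himg : (FA.image f).card ≤ FS.card := by
      refine Finset.card_le_card ?_
      intro y hy
      rw [Finset.mem_image] at hy
      obtain ⟨u, -, rfl⟩ := hy
      rw [hFS, Set.Finite.mem_toFinset]
      exact hfS u
    rw [Set.ncard_eq_toFinset_card A, Set.ncard_eq_toFinset_card S]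
    calc (Set.toFinite A).toFinset.card ≤ 2 * (FA.image f).card := hcard
      _ ≤ 2 * FS.card := by omega
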